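/- Let G be a countable group, let H be a complex Hilbert space, and let (f_g)_{g ∈ G} be a Bessel sequence in H with the property that for any g₁, g₂, h₁, h₂ ∈ G satisfying g₁g₂⁻¹ = h₁h₂⁻¹ one has ⟨f_{g₁}, f_{g₂}⟩ = ⟨f_{h₁}, f_{h₂}⟩. If G can be partitioned into finitely many subsets A₁, …, A_L such that for each 1 ≤ l ≤ L the family (f_g)_{g ∈ A_l} is a Riesz basic sequence, then G can be partitioned into K syndetic subsets S₁, …, S_K with K ≤ L such that for each 1 ≤ k ≤ K the family (f_g)_{g ∈ S_k} is a Riesz basic sequence. -/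

import Mathlib

open scoped InnerProductSpace

/-- `(f i)_{i ∈ I}` is a Bessel sequence: there is `B > 0` with
`‖Σ aᵢ fᵢ‖² ≤ B Σ |aᵢ|²` for every finitely supported family of scalars. -/
def IsBesselSequence {ι : Type*} {H : Type*} [NormedAddCommGroup H]
    [InnerProductSpace ℂ H] (f : ι → H) : Prop :=
  ∃ B > (0 : ℝ), ∀ a : ι →₀ ℂ,
    ‖a.sum fun i c => c • f i‖ ^ 2 ≤ B * ∑ i ∈ a.support, ‖a i‖ ^ 2

/-- `(f i)_{i ∈ A}` is a Riesz basic sequence: there are `c, C > 0` with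
`c Σ |aᵢ|² ≤ ‖Σ aᵢ fᵢ‖² ≤ C Σ |aᵢ|²` for every finitely supported family of
scalars supported in `A`. -/
def IsRieszBasicSequence {ι : Type*} {H : Type*} [NormedAddCommGroup H]
    [InnerProductSpace ℂ H] (f : ι → H) (A : Set ι) : Prop :=
  ∃ c > (0 : ℝ), ∃ C > (0 : ℝ), ∀ a : ι →₀ ℂ, (a.support : Set ι) ⊆ A →
    c * ∑ i ∈ a.support, ‖a i‖ ^ 2 ≤ ‖a.sum fun i c => c • f i‖ ^ 2 ∧
    ‖a.sum fun i c => c • f i‖ ^ 2 ≤ C * ∑ i ∈ a.support, ‖a i‖ ^ 2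

/-- `S ⊆ G` is syndetic: finitely many left translates of `S` cover `G`. -/
def IsSyndetic {G : Type*} [Group G] (S : Set G) : Prop :=
  ∃ F : Finset G, ∀ g : G, ∃ f ∈ F, f * g ∈ S

lemma norm_sq_translate
    {G : Type*} [Group G] {H : Type*} [NormedAddCommGroup H]
    [InnerProductSpace ℂ H]
    (f : G → H)
    (hinv : ∀ g₁ g₂ h₁ h₂ : G, g₁ * g₂⁻¹ = h₁ * h₂⁻¹ →
      ⟪f g₁, f g₂⟫_ℂ = ⟪f h₁, f h₂⟫_ℂ)
    (a : G →₀ ℂ) (g : G) :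
    ‖a.sum fun x c => c • f (x * g)‖ ^ 2 = ‖a.sum fun x c => c • f x‖ ^ 2 := by
  have expand : ∀ h : G → H,
      (⟪a.sum fun x c => c • h x, a.sum fun x c => c • h x⟫_ℂ)
      = ∑ x ∈ a.support, ∑ y ∈ a.support,
          (starRingEnd ℂ) (a x) * a y * ⟪h x, h y⟫_ℂ := by
    intro h
    rw [Finsupp.sum, sum_inner]
    refine Finset.sum_congr rfl fun x hx => ?_
    rw [inner_sum]
    refine Finset.sum_congr rfl fun y hy => ?_
    rw [inner_smul_left, inner_smul_right]; ring
  have key : (⟪a.sum fun x c => c • f (x * g), a.sum fun x c => c • f (x * g)⟫_ℂ)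
      = ⟪a.sum fun x c => c • f x, a.sum fun x c => c • f x⟫_ℂ := by
    rw [expand (fun x => f (x * g)), expand f]
    refine Finset.sum_congr rfl fun x hx => Finset.sum_congr rfl fun y hy => ?_
    rw [hinv (x * g) (y * g) x y (by group)]
  rw [inner_self_eq_norm_sq_to_K, inner_self_eq_norm_sq_to_K] at key
  exact_mod_cast key

/-- Riesz property is invariant under right translation of the index set. -/
lemma riesz_reduction
    {G : Type*} [Group G] [Countable G]
    {H : Type*} [NormedAddCommGroup H] [InnerProductSpace ℂ H]
    (f : G → H)
    (hinv : ∀ g₁ g₂ h₁ h₂ : G, g₁ * g₂⁻¹ = h₁ * h₂⁻¹ →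
      ⟪f g₁, f g₂⟫_ℂ = ⟪f h₁, f h₂⟫_ℂ) :
    ∀ (L : ℕ) (A : Fin L → Set G),
      (∀ l l' : Fin L, l ≠ l' → Disjoint (A l) (A l')) →
      ((⋃ l, A l) = Set.univ) →
      (∀ l : Fin L, IsRieszBasicSequence f (A l)) →
      ∃ K : ℕ, K ≤ L ∧ ∃ S : Fin K → Set G,
        (∀ k k' : Fin K, k ≠ k' → Disjoint (S k) (S k')) ∧
        (⋃ k, S k) = Set.univ ∧
        ∀ k : Fin K, IsSyndetic (S k) ∧ IsRieszBasicSequence f (S k) := by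
  intro L
  induction L with
  | zero =>
    intro A _ hcover _
    exfalso
    have h1 : (1 : G) ∈ ⋃ l, A l := hcover ▸ Set.mem_univ 1
    obtain ⟨l, -⟩ := Set.mem_iUnion.mp h1
    exact l.elim0
  | succ m ih =>
    intro A hdisj hcover hriesz
    classical
    by_cases hall : ∀ l, IsSyndetic (A l)
    · exact ⟨m + 1, le_refl _, A, hdisj, hcover, fun l => ⟨hall l, hriesz l⟩⟩
    push_neg at hall
    obtain ⟨j, hj⟩ := hall
    -- enumeration of G
    obtain ⟨e, he⟩ := exists_surjective_nat G
    -- choose translates avoiding A j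
    have hns : ∀ n : ℕ, ∃ g : G, ∀ i ≤ n, e i * g ∉ A j := by
      intro n
      by_contra hcon
      push_neg at hcon
      refine hj ⟨(Finset.range (n + 1)).image e, fun g => ?_⟩
      obtain ⟨i, hi, hmem⟩ := hcon g
      exact ⟨e i, Finset.mem_image_of_mem e (Finset.mem_range.mpr (Nat.lt_succ_of_le hi)), hmem⟩
    choose g hg using hns
    set U : Ultrafilter ℕ := Filter.hyperfilter ℕ with hU
    set B : Fin (m + 1) → Set G := fun l => {x | {n | x * g n ∈ A l} ∈ U} with hB
    -- A j is never hit (eventually)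
    have hxj : ∀ x : G, {n | x * g n ∈ A j} ∉ U := by
      intro x hmem
      obtain ⟨i, rfl⟩ := he x
      have hsub : {n | e i * g n ∈ A j} ⊆ Set.Iio i := by
        intro n hn
        by_contra hlt
        exact hg n i (le_of_not_gt hlt) hn
      exact Set.Finite.notMem_hyperfilter (Set.finite_Iio i) ((U.mem_of_superset hmem hsub))
    -- each x lies in some B l with l ≠ j
    have hexists : ∀ x : G, ∃ l, l ≠ j ∧ x ∈ B l := by
      intro x
      have huniv : (⋃ l ∈ (Finset.univ : Finset (Fin (m + 1))), {n | x * g n ∈ A l}) ∈ U := by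
        have : (⋃ l ∈ (Finset.univ : Finset (Fin (m + 1))), {n | x * g n ∈ A l}) = Set.univ := by
          ext n
          simp only [Set.mem_iUnion, Set.mem_univ, iff_true, Finset.mem_coe, Finset.mem_univ,
            exists_prop, true_and]
          have hxn : x * g n ∈ ⋃ l, A l := hcover ▸ Set.mem_univ _
          obtain ⟨l, hl⟩ := Set.mem_iUnion.mp hxn
          exact ⟨l, hl⟩
        rw [this]; exact Filter.univ_mem
      have := (Ultrafilter.finite_biUnion_mem_iff (Finset.finite_toSet _)).mp huniv
      obtain ⟨l, -, hl⟩ := this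
      refine ⟨l, fun h => ?_, hl⟩
      exact hxj x (h ▸ hl)
    -- B's are pairwise disjoint
    have hBdisj : ∀ l l' : Fin (m + 1), l ≠ l' → Disjoint (B l) (B l') := by
      intro l l' hne
      rw [Set.disjoint_left]
      intro x hx hx'
      have hint : ({n | x * g n ∈ A l} ∩ {n | x * g n ∈ A l'}) ∈ U := Filter.inter_mem hx hx'
      obtain ⟨n, hn1, hn2⟩ := Ultrafilter.nonempty_of_mem hint
      exact Set.disjoint_left.mp (hdisj l l' hne) hn1 hn2
    -- each B l is a Riesz basic sequence
    have hBriesz : ∀ l : Fin (m + 1), IsRieszBasicSequence f (B l) := by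
      intro l
      obtain ⟨c, hc, C, hC, hA⟩ := hriesz l
      refine ⟨c, hc, C, hC, fun a ha => ?_⟩
      -- find a common n
      have hT : (⋂ x ∈ a.support, {n | x * g n ∈ A l}) ∈ U := by
        refine (Filter.biInter_mem a.support.finite_toSet).mpr fun x hx => ?_
        exact ha hx
      obtain ⟨n, hn⟩ := Ultrafilter.nonempty_of_mem hT
      have hnx : ∀ x ∈ a.support, x * g n ∈ A l := by
        intro x hx
        exact Set.mem_iInter₂.mp hn x hx
      -- translated finsupp
      have hinj : Function.Injective (· * g n) := mul_left_injective (g n)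
      set a' : G →₀ ℂ := a.mapDomain (· * g n) with ha'
      have hsupp : a'.support = a.support.image (· * g n) :=
        Finsupp.mapDomain_support_of_injective hinj a
      have hsub : (a'.support : Set G) ⊆ A l := by
        intro y hy
        rw [hsupp] at hy
        simp only [Finset.coe_image, Set.mem_image, Finset.mem_coe] at hy
        obtain ⟨x, hx, rfl⟩ := hy
        exact hnx x hx
      have h1 : ∑ i ∈ a'.support, ‖a' i‖ ^ 2 = ∑ i ∈ a.support, ‖a i‖ ^ 2 := by
        rw [hsupp, Finset.sum_image (fun x _ y _ h => hinj h)]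
        refine Finset.sum_congr rfl fun x hx => ?_
        rw [ha', Finsupp.mapDomain_apply hinj]
      have h2 : a'.sum (fun i c => c • f i) = a.sum (fun x c => c • f (x * g n)) := by
        rw [ha']
        exact Finsupp.sum_mapDomain_index (fun x => zero_smul ℂ _)
          (fun x c₁ c₂ => add_smul c₁ c₂ (f x))
      have h3 : ‖a.sum fun x c => c • f (x * g n)‖ ^ 2 = ‖a.sum fun x c => c • f x‖ ^ 2 :=
        norm_sq_translate f hinv a (g n)
      obtain ⟨hl, hu⟩ := hA a' hsub
      rw [h1, h2, h3] at hl hu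
      exact ⟨hl, hu⟩
    -- now drop index j
    set A' : Fin m → Set G := fun k => B (j.succAbove k) with hA'
    have hdisj' : ∀ k k' : Fin m, k ≠ k' → Disjoint (A' k) (A' k') := by
      intro k k' hne
      exact hBdisj _ _ fun h => hne (Fin.succAbove_right_injective h)
    have hcover' : (⋃ k, A' k) = Set.univ := by
      ext x
      simp only [Set.mem_iUnion, Set.mem_univ, iff_true]
      obtain ⟨l, hlj, hxl⟩ := hexists x
      obtain ⟨k, rfl⟩ := Fin.exists_succAbove_eq hlj
      exact ⟨k, hxl⟩
    have hriesz' : ∀ k : Fin m, IsRieszBasicSequence f (A' k) := fun k => hBriesz _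
    obtain ⟨K, hK, S, h4, h5, h6⟩ := ih A' hdisj' hcover' hriesz'
    exact ⟨K, hK.trans (Nat.le_succ m), S, h4, h5, h6⟩

theorem syndetic_riesz_partition_of_invariant_bessel
    {G : Type*} [Group G] [Countable G]
    {H : Type*} [NormedAddCommGroup H] [InnerProductSpace ℂ H]
    [CompleteSpace H]
    (f : G → H) (hBessel : IsBesselSequence f)
    (hinv : ∀ g₁ g₂ h₁ h₂ : G, g₁ * g₂⁻¹ = h₁ * h₂⁻¹ →
      ⟪f g₁, f g₂⟫_ℂ = ⟪f h₁, f h₂⟫_ℂ)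
    (L : ℕ) (A : Fin L → Set G)
    (hdisj : ∀ l l' : Fin L, l ≠ l' → Disjoint (A l) (A l'))
    (hcover : (⋃ l, A l) = Set.univ)
    (hriesz : ∀ l : Fin L, IsRieszBasicSequence f (A l)) :
    ∃ K : ℕ, K ≤ L ∧ ∃ S : Fin K → Set G,
      (∀ k k' : Fin K, k ≠ k' → Disjoint (S k) (S k')) ∧
      (⋃ k, S k) = Set.univ ∧
      ∀ k : Fin K, IsSyndetic (S k) ∧ IsRieszBasicSequence f (S k) := by
  exact riesz_reduction f hinv L A hdisj hcover hriesz
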